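/- Let S be a join semilattice with least element 0 and greatest element 1, let M be a monoid of operators on S (containing the identity map and closed under composition), and let F be an upward-closed subset of S with 1 ∈ F satisfying: for all f ∈ M, all a, b ∈ F, and all s ∈ S, if f(a) ∨ s ∈ F then f(b) ∨ s ∈ F. Define φ(F) to be the relation with x φ(F) y iff x = y or there exist a finite sequence x = x_0, x_1, …, x_n = y, operators f_i ∈ M, elements a_i, b_i ∈ F and s_i ∈ S such that x_i = f_i(a_i) ∨ s_i and x_{i+1} = f_i(b_i) ∨ s_i for all i < n; and define ψ(F) = {(x,y) : for all f ∈ M and s ∈ S, f(x) ∨ s ∈ F iff f(y) ∨ s ∈ F}. Then φ(F) is a congruence of (S,∨,0,M) whose class of 1 is exactly F, and for any congruence θ of (S,∨,0,M): the class of 1 under θ equals F if and only if φ(F) ⊆ θ ⊆ ψ(F). -/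

import Mathlib

universe u

/-- An operator on a join semilattice with least element 0: a map preserving
binary joins and 0. -/
def IsOperator {S : Type u} [SemilatticeSup S] [OrderBot S] (f : S → S) : Prop :=
  (∀ x y : S, f (x ⊔ y) = f x ⊔ f y) ∧ f ⊥ = ⊥

/-- A congruence of `(S,∨,0,M)`: an equivalence relation compatible with joins
and with every operator in `M`. -/
def IsCong {S : Type u} [SemilatticeSup S] (M : Set (S → S)) (θ : S → S → Prop) : Prop :=
  Equivalence θ ∧ (∀ x y s : S, θ x y → θ (x ⊔ s) (y ⊔ s)) ∧
    (∀ f ∈ M, ∀ x y : S, θ x y → θ (f x) (f y))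

/-- The relation `φ(F)`: `x φ(F) y` iff `x = y` or there are a finite sequence
`x = x₀, x₁, …, xₙ = y`, operators `fᵢ ∈ M`, elements `aᵢ, bᵢ ∈ F` and `sᵢ ∈ S`
such that `xᵢ = fᵢ(aᵢ) ∨ sᵢ` and `xᵢ₊₁ = fᵢ(bᵢ) ∨ sᵢ`. -/
def phiRel {S : Type u} [SemilatticeSup S] (M : Set (S → S)) (F : Set S) :
    S → S → Prop :=
  fun x y => x = y ∨
    ∃ (n : ℕ) (_ : 0 < n) (xs : Fin (n + 1) → S) (f : Fin n → (S → S))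
      (a b : Fin n → S) (s : Fin n → S),
      xs 0 = x ∧ xs (Fin.last n) = y ∧
      ∀ i : Fin n, f i ∈ M ∧ a i ∈ F ∧ b i ∈ F ∧
        xs i.castSucc = f i (a i) ⊔ s i ∧ xs i.succ = f i (b i) ⊔ s i

/-- The relation `ψ(F)`. -/
def psiRel {S : Type u} [SemilatticeSup S] (M : Set (S → S)) (F : Set S) :
    S → S → Prop :=
  fun x y => ∀ f ∈ M, ∀ s : S, (f x ⊔ s ∈ F ↔ f y ⊔ s ∈ F)

section aux
variable {S : Type u} [SemilatticeSup S] (M : Set (S → S)) (F : Set S)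

def stepRel : S → S → Prop := fun x y =>
  ∃ f ∈ M, ∃ a ∈ F, ∃ b ∈ F, ∃ s : S, x = f a ⊔ s ∧ y = f b ⊔ s

variable {M F}

lemma stepRel_symm : Symmetric (stepRel M F) := by
  rintro x y ⟨f, hf, a, ha, b, hb, s, hx, hy⟩
  exact ⟨f, hf, b, hb, a, ha, s, hy, hx⟩

lemma phiRel_of_step {x y : S} (h : stepRel M F x y) : phiRel M F x y := by
  obtain ⟨f, hf, a, ha, b, hb, s, hx, hy⟩ := h
  refine Or.inr ⟨1, one_pos, ![x, y], ![f], ![a], ![b], ![s], rfl, rfl, ?_⟩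
  intro i
  fin_cases i
  refine ⟨hf, ha, hb, ?_, ?_⟩ <;> simpa

lemma phiRel_tail {x y z : S} (h : phiRel M F x y) (hyz : stepRel M F y z) :
    phiRel M F x z := by
  rcases h with rfl | ⟨n, hn, xs, f, a, b, s, h0, hl, hc⟩
  · exact phiRel_of_step hyz
  · obtain ⟨g, hg, c, hcF, d, hdF, t, hy, hz⟩ := hyz
    refine Or.inr ⟨n + 1, Nat.succ_pos _, Fin.snoc xs z, Fin.snoc f g,
      Fin.snoc a c, Fin.snoc b d, Fin.snoc s t, ?_, ?_, ?_⟩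
    · rw [← h0]
      have : (0 : Fin (n + 2)) = (0 : Fin (n + 1)).castSucc := by
        simp [Fin.ext_iff]
      rw [this, Fin.snoc_castSucc]
    · simp [Fin.snoc_last]
    · intro i
      refine Fin.lastCases ?_ ?_ i
      · refine ⟨by simpa using hg, by simpa using hcF, by simpa using hdF, ?_, ?_⟩
        · rw [Fin.snoc_castSucc, hl, hy]; simp [Fin.snoc_last]
        · rw [Fin.succ_last, Fin.snoc_last, hz]; simp [Fin.snoc_last]
      · intro j
        obtain ⟨hfj, haj, hbj, e1, e2⟩ := hc j
        refine ⟨by simpa using hfj, by simpa using haj, by simpa using hbj, ?_, ?_⟩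
        · rw [Fin.snoc_castSucc, e1]; simp [Fin.snoc_castSucc]
        · rw [Fin.succ_castSucc, Fin.snoc_castSucc, e2]; simp [Fin.snoc_castSucc]

lemma phiRel_iff_rtg {x y : S} :
    phiRel M F x y ↔ Relation.ReflTransGen (stepRel M F) x y := by
  constructor
  · rintro (rfl | ⟨n, hn, xs, f, a, b, s, h0, hl, hc⟩)
    · exact .refl
    · have key : ∀ i : Fin (n + 1), Relation.ReflTransGen (stepRel M F) (xs 0) (xs i) := by
        intro i
        induction i using Fin.induction with
        | zero => exact .refl
        | succ j ih =>
          obtain ⟨hfj, haj, hbj, e1, e2⟩ := hc j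
          exact ih.tail ⟨f j, hfj, a j, haj, b j, hbj, s j, e1, e2⟩
      rw [← h0, ← hl]; exact key (Fin.last n)
  · intro h
    induction h with
    | refl => exact Or.inl rfl
    | tail _ h2 ih => exact phiRel_tail ih h2

end aux


theorem phiRel_psiRel_interval (S : Type u) [SemilatticeSup S] [OrderBot S]
    [OrderTop S] (M : Set (S → S))
    (hop : ∀ f ∈ M, IsOperator f)
    (hid : id ∈ M)
    (hcomp : ∀ f ∈ M, ∀ g ∈ M, f ∘ g ∈ M)
    (F : Set S)
    (htopF : (⊤ : S) ∈ F)
    (hup : ∀ x y : S, x ≤ y → x ∈ F → y ∈ F)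
    (hF : ∀ f ∈ M, ∀ a ∈ F, ∀ b ∈ F, ∀ s : S, f a ⊔ s ∈ F → f b ⊔ s ∈ F) :
    IsCong M (phiRel M F) ∧
    ({x : S | phiRel M F x ⊤} = F) ∧
    (∀ θ : S → S → Prop, IsCong M θ →
      ({x : S | θ x ⊤} = F ↔
        ((∀ x y : S, phiRel M F x y → θ x y) ∧
         (∀ x y : S, θ x y → psiRel M F x y)))) := by
  have hstep_theta : ∀ θ : S → S → Prop, IsCong M θ → {x : S | θ x ⊤} = F →
      ∀ x y, stepRel M F x y → θ x y := by
    rintro θ ⟨heq, hsup, hM⟩ hclass x y ⟨f, hf, a, ha, b, hb, s, rfl, rfl⟩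
    have h1 : θ a ⊤ := by rw [← hclass] at ha; exact ha
    have h2 : θ b ⊤ := by rw [← hclass] at hb; exact hb
    exact hsup _ _ s (hM f hf _ _ (heq.trans h1 (heq.symm h2)))
  have hmemF : ∀ x y : S, stepRel M F x y → y ∈ F → x ∈ F := by
    rintro x y ⟨f, hf, a, ha, b, hb, s, rfl, rfl⟩ hy
    exact hF f hf b hb a ha s hy
  have hstep_top : ∀ x ∈ F, stepRel M F x ⊤ := fun x hx =>
    ⟨id, hid, x, hx, ⊤, htopF, ⊥, by simp, by simp⟩
  have cong : IsCong M (phiRel M F) := by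
    refine ⟨⟨fun x => Or.inl rfl, ?_, ?_⟩, ?_, ?_⟩
    · intro x y h
      rw [phiRel_iff_rtg] at h ⊢
      exact (@Relation.ReflTransGen.symmetric _ _ ⟨fun a b hab => stepRel_symm hab⟩).symm _ _ h
    · intro x y z h1 h2
      rw [phiRel_iff_rtg] at h1 h2 ⊢
      exact h1.trans h2
    · intro x y s h
      rw [phiRel_iff_rtg] at h ⊢
      refine Relation.ReflTransGen.lift (· ⊔ s) ?_ x y h
      rintro u v ⟨f, hf, a, ha, b, hb, t, rfl, rfl⟩
      exact ⟨f, hf, a, ha, b, hb, t ⊔ s, by simp [sup_assoc], by simp [sup_assoc]⟩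
    · intro g hg x y h
      rw [phiRel_iff_rtg] at h ⊢
      refine Relation.ReflTransGen.lift g ?_ x y h
      rintro u v ⟨f, hf, a, ha, b, hb, t, rfl, rfl⟩
      exact ⟨g ∘ f, hcomp g hg f hf, a, ha, b, hb, g t,
        by simp [(hop g hg).1], by simp [(hop g hg).1]⟩
  have hclassF : {x : S | phiRel M F x ⊤} = F := by
    ext x
    simp only [Set.mem_setOf_eq]
    constructor
    · intro h
      rw [phiRel_iff_rtg] at h
      have key : ∀ y z : S, Relation.ReflTransGen (stepRel M F) y z → z ∈ F → y ∈ F := by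
        intro y z h
        induction h with
        | refl => exact id
        | tail _ h2 ih => exact fun hz => ih (hmemF _ _ h2 hz)
      exact key x ⊤ h htopF
    · intro hx
      exact phiRel_of_step (hstep_top x hx)
  refine ⟨cong, hclassF, ?_⟩
  rintro θ hθ
  obtain ⟨heq, hsup, hM⟩ := hθ
  constructor
  · intro hclass
    refine ⟨?_, ?_⟩
    · intro x y h
      rw [phiRel_iff_rtg] at h
      induction h with
      | refl => exact heq.refl _
      | tail _ h2 ih => exact heq.trans ih (hstep_theta θ ⟨heq, hsup, hM⟩ hclass _ _ h2)
    · intro x y hxy f hf s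
      have h1 : θ (f x ⊔ s) (f y ⊔ s) := hsup _ _ s (hM f hf _ _ hxy)
      constructor
      · intro hm
        rw [← hclass] at hm ⊢
        exact heq.trans (heq.symm h1) hm
      · intro hm
        rw [← hclass] at hm ⊢
        exact heq.trans h1 hm
  · rintro ⟨hsub, hsup2⟩
    ext x
    simp only [Set.mem_setOf_eq]
    constructor
    · intro h
      have hpsi := hsup2 x ⊤ h id hid ⊥
      exact (by simpa using hpsi : x ∈ F ↔ ⊤ ∈ F).mpr htopF
    · intro hx
      exact hsub x ⊤ (phiRel_of_step (hstep_top x hx))
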